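/- For i ≠ j, Cov(y_i², y_j²) = π₁(1 − π₁)(τ₁² − τ₂²)². In particular, this covariance is zero if and only if τ₁² = τ₂² (when 0 < π₁ < 1). -/

import Mathlib

open MeasureTheory ProbabilityTheory

/-- For the two-class mixture `yᵢ = τ₁ aᵢ U + τ₂ bᵢ (1 − U)` with `U` Bernoulli
with mean `π₁` and `a₁, a₂, b₁, b₂, U` mutually independent, each `aᵢ, bᵢ`
having mean 0 and variance 1:
`Cov(y₁², y₂²) = π₁(1 − π₁)(τ₁² − τ₂²)²`, which vanishes iff `τ₁² = τ₂²`. -/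
theorem stmt15 {Ωs : Type*} [MeasurableSpace Ωs] (μ : Measure Ωs)
    [IsProbabilityMeasure μ]
    (a₁ a₂ b₁ b₂ U : Ωs → ℝ) (π₁ τ₁ τ₂ : ℝ)
    (hπ₀ : 0 < π₁) (hπ₁ : π₁ < 1) (hτ₁ : 0 < τ₁) (hτ₂ : 0 < τ₂)
    (hma₁ : Measurable a₁) (hma₂ : Measurable a₂)
    (hmb₁ : Measurable b₁) (hmb₂ : Measurable b₂) (hmU : Measurable U)
    (hindep : iIndepFun ![a₁, a₂, b₁, b₂, U] μ)
    (hU01 : ∀ ω, U ω = 0 ∨ U ω = 1)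
    (hUmean : ∫ ω, U ω ∂μ = π₁)
    (hInt : ∀ f ∈ [a₁, a₂, b₁, b₂], Integrable f μ ∧ Integrable (fun ω => f ω ^ 2) μ)
    (hmean : ∀ f ∈ [a₁, a₂, b₁, b₂], ∫ ω, f ω ∂μ = 0)
    (hvar : ∀ f ∈ [a₁, a₂, b₁, b₂], ∫ ω, f ω ^ 2 ∂μ = 1) :
    let y₁ : Ωs → ℝ := fun ω => τ₁ * a₁ ω * U ω + τ₂ * b₁ ω * (1 - U ω)
    let y₂ : Ωs → ℝ := fun ω => τ₁ * a₂ ω * U ω + τ₂ * b₂ ω * (1 - U ω)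
    (∫ ω, y₁ ω ^ 2 * y₂ ω ^ 2 ∂μ) - (∫ ω, y₁ ω ^ 2 ∂μ) * (∫ ω, y₂ ω ^ 2 ∂μ)
        = π₁ * (1 - π₁) * (τ₁ ^ 2 - τ₂ ^ 2) ^ 2 ∧
      ((∫ ω, y₁ ω ^ 2 * y₂ ω ^ 2 ∂μ) - (∫ ω, y₁ ω ^ 2 ∂μ) * (∫ ω, y₂ ω ^ 2 ∂μ) = 0 ↔
        τ₁ ^ 2 = τ₂ ^ 2) := by
  intro y₁ y₂
  have hf : ∀ i, Measurable (![a₁, a₂, b₁, b₂, U] i) := by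
    intro i; fin_cases i <;> assumption
  -- integrability of U and 1 - U
  have hIU : Integrable U μ := by
    refine (integrable_const (1 : ℝ)).mono' hmU.aestronglyMeasurable ?_
    filter_upwards with ω
    rcases hU01 ω with h | h <;> simp [h]
  have hIU' : Integrable (fun ω => 1 - U ω) μ := (integrable_const 1).sub hIU
  have hUmean' : ∫ ω, (1 - U ω) ∂μ = 1 - π₁ := by
    rw [integral_sub (integrable_const 1) hIU, hUmean, integral_const]; simp
  -- basic integrability
  have hIa₁ := (hInt a₁ (by simp)).2
  have hIa₂ := (hInt a₂ (by simp)).2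
  have hIb₁ := (hInt b₁ (by simp)).2
  have hIb₂ := (hInt b₂ (by simp)).2
  have hva₁ := hvar a₁ (by simp)
  have hva₂ := hvar a₂ (by simp)
  have hvb₁ := hvar b₁ (by simp)
  have hvb₂ := hvar b₂ (by simp)
  have hsq : Measurable fun x : ℝ => x ^ 2 := measurable_id.pow_const 2
  have h1m : Measurable fun x : ℝ => 1 - x := measurable_const.sub measurable_id
  -- independence facts
  have iA2U : IndepFun (fun ω => a₂ ω ^ 2) U μ :=
    (hindep.indepFun (show (1 : Fin 5) ≠ 4 by decide)).comp hsq measurable_id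
  have iB2U : IndepFun (fun ω => b₂ ω ^ 2) (fun ω => 1 - U ω) μ :=
    (hindep.indepFun (show (3 : Fin 5) ≠ 4 by decide)).comp hsq h1m
  have iA1 : IndepFun (fun ω => a₁ ω ^ 2) (fun ω => a₂ ω ^ 2 * U ω) μ := by
    have h := hindep.indepFun_prodMk hf 1 4 0 (by decide) (by decide)
    exact (h.comp (show Measurable fun p : ℝ × ℝ => p.1 ^ 2 * p.2 from
      (measurable_fst.pow_const 2).mul measurable_snd) hsq).symm
  have iB1 : IndepFun (fun ω => b₁ ω ^ 2) (fun ω => b₂ ω ^ 2 * (1 - U ω)) μ := by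
    have h := hindep.indepFun_prodMk hf 3 4 2 (by decide) (by decide)
    exact (h.comp (show Measurable fun p : ℝ × ℝ => p.1 ^ 2 * (1 - p.2) from
      (measurable_fst.pow_const 2).mul (measurable_const.sub measurable_snd)) hsq).symm
  have iA1U : IndepFun (fun ω => a₁ ω ^ 2) U μ :=
    (hindep.indepFun (show (0 : Fin 5) ≠ 4 by decide)).comp hsq measurable_id
  have iB1U : IndepFun (fun ω => b₁ ω ^ 2) (fun ω => 1 - U ω) μ :=
    (hindep.indepFun (show (2 : Fin 5) ≠ 4 by decide)).comp hsq h1m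
  -- integrability of products
  have hIA1U : Integrable (fun ω => a₁ ω ^ 2 * U ω) μ := iA1U.integrable_mul hIa₁ hIU
  have hIA2U : Integrable (fun ω => a₂ ω ^ 2 * U ω) μ := iA2U.integrable_mul hIa₂ hIU
  have hIB1U : Integrable (fun ω => b₁ ω ^ 2 * (1 - U ω)) μ := iB1U.integrable_mul hIb₁ hIU'
  have hIB2U : Integrable (fun ω => b₂ ω ^ 2 * (1 - U ω)) μ := iB2U.integrable_mul hIb₂ hIU'
  have hIAA : Integrable (fun ω => a₁ ω ^ 2 * (a₂ ω ^ 2 * U ω)) μ := iA1.integrable_mul hIa₁ hIA2U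
  have hIBB : Integrable (fun ω => b₁ ω ^ 2 * (b₂ ω ^ 2 * (1 - U ω))) μ :=
    iB1.integrable_mul hIb₁ hIB2U
  -- product expectations
  have eA2U : ∫ ω, a₂ ω ^ 2 * U ω ∂μ = π₁ := by
    have h := iA2U.integral_fun_mul_eq_mul_integral hIa₂.aestronglyMeasurable hIU.aestronglyMeasurable
    rw [hva₂, hUmean, one_mul] at h; exact h
  have eB2U : ∫ ω, b₂ ω ^ 2 * (1 - U ω) ∂μ = 1 - π₁ := by
    have h := iB2U.integral_fun_mul_eq_mul_integral hIb₂.aestronglyMeasurable hIU'.aestronglyMeasurable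
    rw [hvb₂, hUmean', one_mul] at h; exact h
  have eA1U : ∫ ω, a₁ ω ^ 2 * U ω ∂μ = π₁ := by
    have h := iA1U.integral_fun_mul_eq_mul_integral hIa₁.aestronglyMeasurable hIU.aestronglyMeasurable
    rw [hva₁, hUmean, one_mul] at h; exact h
  have eB1U : ∫ ω, b₁ ω ^ 2 * (1 - U ω) ∂μ = 1 - π₁ := by
    have h := iB1U.integral_fun_mul_eq_mul_integral hIb₁.aestronglyMeasurable hIU'.aestronglyMeasurable
    rw [hvb₁, hUmean', one_mul] at h; exact h
  have eAA : ∫ ω, a₁ ω ^ 2 * (a₂ ω ^ 2 * U ω) ∂μ = π₁ := by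
    have h := iA1.integral_fun_mul_eq_mul_integral hIa₁.aestronglyMeasurable hIA2U.aestronglyMeasurable
    rw [hva₁, eA2U, one_mul] at h; exact h
  have eBB : ∫ ω, b₁ ω ^ 2 * (b₂ ω ^ 2 * (1 - U ω)) ∂μ = 1 - π₁ := by
    have h := iB1.integral_fun_mul_eq_mul_integral hIb₁.aestronglyMeasurable hIB2U.aestronglyMeasurable
    rw [hvb₁, eB2U, one_mul] at h; exact h
  -- pointwise identities using U ∈ {0,1}
  have hy1 : ∀ ω, y₁ ω ^ 2 = τ₁ ^ 2 * (a₁ ω ^ 2 * U ω) + τ₂ ^ 2 * (b₁ ω ^ 2 * (1 - U ω)) := by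
    intro ω; rcases hU01 ω with h | h <;> simp only [y₁, h] <;> ring
  have hy2 : ∀ ω, y₂ ω ^ 2 = τ₁ ^ 2 * (a₂ ω ^ 2 * U ω) + τ₂ ^ 2 * (b₂ ω ^ 2 * (1 - U ω)) := by
    intro ω; rcases hU01 ω with h | h <;> simp only [y₂, h] <;> ring
  have hy12 : ∀ ω, y₁ ω ^ 2 * y₂ ω ^ 2 =
      τ₁ ^ 4 * (a₁ ω ^ 2 * (a₂ ω ^ 2 * U ω)) +
      τ₂ ^ 4 * (b₁ ω ^ 2 * (b₂ ω ^ 2 * (1 - U ω))) := by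
    intro ω; rcases hU01 ω with h | h <;> simp only [y₁, y₂, h] <;> ring
  -- the three integrals
  have E1 : ∫ ω, y₁ ω ^ 2 ∂μ = τ₁ ^ 2 * π₁ + τ₂ ^ 2 * (1 - π₁) := by
    simp_rw [hy1]
    rw [integral_add (hIA1U.const_mul _) (hIB1U.const_mul _), integral_const_mul,
      integral_const_mul, eA1U, eB1U]
  have E2 : ∫ ω, y₂ ω ^ 2 ∂μ = τ₁ ^ 2 * π₁ + τ₂ ^ 2 * (1 - π₁) := by
    simp_rw [hy2]
    rw [integral_add (hIA2U.const_mul _) (hIB2U.const_mul _), integral_const_mul,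
      integral_const_mul, eA2U, eB2U]
  have E12 : ∫ ω, y₁ ω ^ 2 * y₂ ω ^ 2 ∂μ = τ₁ ^ 4 * π₁ + τ₂ ^ 4 * (1 - π₁) := by
    simp_rw [hy12]
    rw [integral_add (hIAA.const_mul _) (hIBB.const_mul _), integral_const_mul,
      integral_const_mul, eAA, eBB]
  rw [E1, E2, E12]
  have key : τ₁ ^ 4 * π₁ + τ₂ ^ 4 * (1 - π₁) -
      (τ₁ ^ 2 * π₁ + τ₂ ^ 2 * (1 - π₁)) * (τ₁ ^ 2 * π₁ + τ₂ ^ 2 * (1 - π₁)) =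
      π₁ * (1 - π₁) * (τ₁ ^ 2 - τ₂ ^ 2) ^ 2 := by ring
  refine ⟨key, ?_⟩
  rw [key]
  have hπ : 0 < π₁ * (1 - π₁) := mul_pos hπ₀ (by linarith)
  constructor
  · intro h
    have h2 : (τ₁ ^ 2 - τ₂ ^ 2) ^ 2 = 0 := by
      rcases mul_eq_zero.mp h with h' | h'
      · exact absurd h' (ne_of_gt hπ)
      · exact h'
    have := pow_eq_zero_iff (n := 2) (by norm_num) |>.mp h2
    linarith
  · intro h; rw [h]; ring
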